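/- Let a < b and let h : [a,b] → ℝ be a convex integrable function with h(a) ≤ (1/(b-a)) ∫ₐᵇ h(t) dt. Then h belongs to the class M⁺ on [a,b]: there exists c ∈ [a,b] such that h(x) < (1/(b-a)) ∫ₐᵇ h(t) dt implies x < c, and h(x) > (1/(b-a)) ∫ₐᵇ h(t) dt implies x > c. -/

import Mathlib

open MeasureTheory Set

lemma int_lemma (a b p q A M : ℝ) (h : ℝ → ℝ)
    (hap : a ≤ p) (hpq : p < q) (hqb : q ≤ b)
    (hint : IntegrableOn h (Icc a b))
    (hMA : M < A)
    (hA : ∀ t ∈ Ico a b, h t ≤ A)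
    (hM : ∀ t ∈ Icc p q, h t ≤ M)
    (hI : (∫ t in a..b, h t) = (b - a) * A) : False := by
  have hab : a < b := lt_of_le_of_lt hap (lt_of_lt_of_le hpq hqb)
  have hpb : p < b := lt_of_lt_of_le hpq hqb
  have ii : ∀ u v : ℝ, a ≤ u → u ≤ v → v ≤ b → IntervalIntegrable h volume u v := by
    intro u v hau huv hvb
    exact (hint.mono_set (by rw [uIcc_of_le huv]; exact Icc_subset_Icc hau hvb)).intervalIntegrable
  have i1 := ii a p le_rfl hap (le_of_lt hpb)
  have i2 := ii p q (hap) hpq.le hqb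
  have i3 := ii q b (hap.trans hpq.le) hqb le_rfl
  have split : (∫ t in a..b, h t) = (∫ t in a..p, h t) + (∫ t in p..q, h t) + (∫ t in q..b, h t) := by
    rw [intervalIntegral.integral_add_adjacent_intervals i1 i2,
      intervalIntegral.integral_add_adjacent_intervals (i1.trans i2) i3]
  have e1 : (∫ t in a..p, h t) ≤ A * (p - a) := by
    calc (∫ t in a..p, h t) ≤ ∫ t in a..p, A := by
          apply intervalIntegral.integral_mono_on hap i1 (intervalIntegrable_const)
          intro t ht
          exact hA t ⟨ht.1, lt_of_le_of_lt ht.2 hpb⟩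
      _ = A * (p - a) := by simp [mul_comm]
  have e2 : (∫ t in p..q, h t) ≤ M * (q - p) := by
    calc (∫ t in p..q, h t) ≤ ∫ t in p..q, M := by
          apply intervalIntegral.integral_mono_on hpq.le i2 (intervalIntegrable_const)
          exact hM
      _ = M * (q - p) := by simp [mul_comm]
  have e3 : (∫ t in q..b, h t) ≤ A * (b - q) := by
    have hq : (∫ t in q..b, h t) = ∫ t in Ioo q b, h t := by
      rw [intervalIntegral.integral_of_le hqb, integral_Ioc_eq_integral_Ioo]
    rw [hq]
    have hmono : (∫ t in Ioo q b, h t) ≤ ∫ t in Ioo q b, (fun _ => A) t := by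
      apply setIntegral_mono_on
      · exact hint.mono_set (fun t ht => ⟨(hap.trans hpq.le).trans ht.1.le, ht.2.le⟩)
      · exact integrableOn_const (by simp [Real.volume_Ioo])
      · exact measurableSet_Ioo
      · intro t ht; exact hA t ⟨((hap.trans hpq.le).trans ht.1.le), ht.2⟩
    calc (∫ t in Ioo q b, h t) ≤ ∫ t in Ioo q b, (fun _ => A) t := hmono
      _ = (b - q) * A := by
          rw [setIntegral_const, Real.volume_real_Ioo_of_le (by linarith)]
          simp [smul_eq_mul]
      _ = A * (b - q) := mul_comm _ _
  have hlt : M * (q - p) < A * (q - p) := by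
    apply mul_lt_mul_of_pos_right hMA; linarith
  nlinarith [split, e1, e2, e3, hI]

theorem convex_mem_MPlus (a b : ℝ) (hab : a < b) (h : ℝ → ℝ)
    (hh_conv : ConvexOn ℝ (Icc a b) h)
    (hh_int : IntegrableOn h (Icc a b))
    (hh_a : h a ≤ (1 / (b - a)) * ∫ t in a..b, h t) :
    ∃ c ∈ Icc a b, ∀ x ∈ Icc a b,
      (h x < (1 / (b - a)) * ∫ t in a..b, h t → x < c) ∧
      ((1 / (b - a)) * ∫ t in a..b, h t < h x → c < x) := by
  set A : ℝ := (1 / (b - a)) * ∫ t in a..b, h t with hAdef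
  have hba : b - a ≠ 0 := by linarith
  have hIA : (∫ t in a..b, h t) = (b - a) * A := by
    rw [hAdef]; field_simp
  have aIcc : a ∈ Icc a b := ⟨le_rfl, hab.le⟩
  have bIcc : b ∈ Icc a b := ⟨hab.le, le_rfl⟩
  -- max principle on subsegments
  have hmax : ∀ u v t : ℝ, u ∈ Icc a b → v ∈ Icc a b → u ≤ t → t ≤ v →
      h t ≤ max (h u) (h v) := by
    intro u v t hu hv hut htv
    exact hh_conv.le_on_segment hu hv (by rw [segment_eq_Icc (hut.trans htv)]; exact ⟨hut, htv⟩)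
  set L : Set ℝ := {x ∈ Icc a b | h x < A} with hLdef
  have hLsub : ∀ y ∈ L, y ∈ Icc a b := fun y hy => hy.1
  have hbdd : BddAbove (insert a L) := by
    refine ⟨b, ?_⟩
    rintro y (rfl | hy)
    · exact hab.le
    · exact hy.1.2
  set c : ℝ := sSup (insert a L) with hcdef
  have hac : a ≤ c := le_csSup hbdd (mem_insert _ _)
  have hcb : c ≤ b := by
    apply csSup_le ⟨a, mem_insert _ _⟩
    rintro y (rfl | hy)
    · exact hab.le
    · exact hy.1.2
  -- F1 : A ≤ h b
  have F1 : A ≤ h b := by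
    by_contra hfb
    push_neg at hfb
    set m : ℝ := (a + b) / 2 with hmdef
    have hm_mem : m ∈ Icc a b := ⟨by simp [hmdef]; linarith, by simp [hmdef]; linarith⟩
    have hhm : h m < A := by
      have h2 := hh_conv.2 aIcc bIcc (by norm_num : (0:ℝ) ≤ 1/2) (by norm_num : (0:ℝ) ≤ 1/2)
        (by norm_num)
      have hmeq : (1/2 : ℝ) • a + (1/2 : ℝ) • b = m := by
        simp [hmdef, smul_eq_mul]; ring
      rw [hmeq] at h2
      simp only [smul_eq_mul] at h2
      linarith
    refine int_lemma a b m b A (max (h m) (h b)) h (by linarith [hm_mem.1]) ?_ le_rfl hh_int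
      (max_lt hhm hfb) ?_ ?_ hIA
    · simp [hmdef]; linarith
    · intro t ht
      rcases le_total t m with htm | hmt
      · exact le_trans (hmax a m t aIcc hm_mem ht.1 htm) (max_le hh_a hhm.le)
      · exact le_trans (hmax m b t hm_mem bIcc hmt ht.2.le) (max_le hhm.le hfb.le)
    · intro t ht
      exact hmax m b t hm_mem bIcc ht.1 ht.2
  refine ⟨c, ⟨hac, hcb⟩, ?_⟩
  intro x hx
  constructor
  · -- h x < A → x < c
    intro hxA
    have hxb : x < b := by
      rcases lt_or_eq_of_le hx.2 with h' | h'
      · exact h'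
      · exfalso; rw [h'] at hxA; linarith
    have hbx : 0 < h b - h x := by linarith
    set T : ℝ := (A - h x) / (h b - h x) with hTdef
    have hT : 0 < T := div_pos (by linarith) hbx
    set t : ℝ := min (T / 2) (1 / 2) with htdef
    have ht0 : 0 < t := lt_min (by linarith) (by norm_num)
    have ht1 : t < 1 := lt_of_le_of_lt (min_le_right _ _) (by norm_num)
    have htT : t < T := lt_of_le_of_lt (min_le_left _ _) (by linarith)
    set y : ℝ := (1 - t) * x + t * b with hydef
    have hxy : x < y := by
      have : y - x = t * (b - x) := by rw [hydef]; ring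
      nlinarith
    have hyb : y < b := by
      have : b - y = (1 - t) * (b - x) := by rw [hydef]; ring
      nlinarith
    have hyIcc : y ∈ Icc a b := ⟨le_trans hx.1 hxy.le, hyb.le⟩
    have hhy : h y < A := by
      have h2 := hh_conv.2 hx bIcc (by linarith : (0:ℝ) ≤ 1 - t) ht0.le (by ring)
      simp only [smul_eq_mul] at h2
      rw [← hydef] at h2
      have hTc : T * (h b - h x) = A - h x := div_mul_cancel₀ _ (ne_of_gt hbx)
      have hlt : t * (h b - h x) < T * (h b - h x) := mul_lt_mul_of_pos_right htT hbx
      have heq : (1 - t) * h x + t * h b = h x + t * (h b - h x) := by ring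
      linarith
    have : y ≤ c := le_csSup hbdd (mem_insert_of_mem _ ⟨hyIcc, hhy⟩)
    linarith
  · -- A < h x → c < x
    intro hxA
    have hax : a < x := by
      rcases lt_or_eq_of_le hx.1 with h' | h'
      · exact h'
      · exfalso; rw [← h'] at hxA; linarith
    have hLx : ∀ y ∈ L, y < x := by
      intro y hy
      by_contra hge
      push_neg at hge
      have := hmax a y x aIcc hy.1 hx.1 hge
      have : h x ≤ A := le_trans this (max_le hh_a hy.2.le)
      linarith
    rcases lt_or_eq_of_le hx.2 with hxb | hxb
    · -- x < b
      set D : ℝ := (h b - A) + (h x - A) with hDdef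
      have hD : 0 < D := by rw [hDdef]; linarith
      set S : ℝ := (h x - A) / D with hSdef
      have hS : 0 < S := div_pos (by linarith) hD
      set z : ℝ := x - S * (b - x) with hzdef
      have hzx : z < x := by
        have : 0 < S * (b - x) := mul_pos hS (by linarith)
        rw [hzdef]; linarith
      have key : ∀ y ∈ L, y ≤ z := by
        intro y hy
        have hyx : y < x := hLx y hy
        have hby : y < b := lt_trans hyx hxb
        set s : ℝ := (x - y) / (b - y) with hsdef
        have hs0 : 0 < s := div_pos (by linarith) (by linarith)
        have hs1 : s < 1 := (div_lt_one (by linarith)).2 (by linarith)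
        have hne : b - y ≠ 0 := by intro hc; linarith
        have hxeq : (1 - s) * y + s * b = x := by
          rw [hsdef]; field_simp; ring
        have h2 := hh_conv.2 hy.1 bIcc (by linarith : (0:ℝ) ≤ 1 - s) hs0.le (by ring)
        simp only [smul_eq_mul] at h2
        rw [hxeq] at h2
        -- h2 : h x ≤ (1 - s) * h y + s * h b
        have hyA : h y < A := hy.2
        have hmul1 : (1 - s) * h y < (1 - s) * A := by
          apply mul_lt_mul_of_pos_left hyA; linarith
        have step1 : h x - A < s * (h b - A) := by nlinarith
        have hmul2 : 0 < s * (h x - A) := mul_pos hs0 (by linarith)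
        have hDexp : s * D = s * (h b - A) + s * (h x - A) := by rw [hDdef]; ring
        have step2 : h x - A < s * D := by linarith
        have hsS : S < s := by
          rw [hSdef, div_lt_iff₀ hD]; linarith
        have hsb : s * (b - y) = x - y := by
          rw [hsdef, div_mul_cancel₀ _ hne]
        have hstep3 : S * (b - x) < s * (b - x) := by
          apply mul_lt_mul_of_pos_right hsS; linarith
        have hstep4 : s * (b - x) ≤ s * (b - y) := by
          apply mul_le_mul_of_nonneg_left (by linarith) hs0.le
        have : S * (b - x) < x - y := by linarith
        rw [hzdef]; linarith
      have : c ≤ max a z := by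
        apply csSup_le ⟨a, mem_insert _ _⟩
        rintro w (rfl | hw)
        · exact le_max_left _ _
        · exact le_trans (key w hw) (le_max_right _ _)
      calc c ≤ max a z := this
        _ < x := max_lt hax hzx
    · -- x = b
      subst hxb
      by_contra hcge
      push_neg at hcge
      have hceq : sSup (insert a L) = x := le_antisymm hcb hcge
      have hex : ∀ z : ℝ, z < x → ∃ y ∈ insert a L, z < y := by
        intro z hz
        apply exists_lt_of_lt_csSup ⟨a, mem_insert _ _⟩
        rw [hceq]; exact hz
      obtain ⟨y0, hy0m, hay0⟩ := hex a hax
      have hy0L : y0 ∈ L := by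
        rcases hy0m with rfl | hy0L
        · exact absurd hay0 (lt_irrefl _)
        · exact hy0L
      have hy0b : y0 < x := hLx y0 hy0L
      have hLconv : Convex ℝ L := hh_conv.convex_lt A
      have hsub : Ico y0 x ⊆ L := by
        intro t ht
        obtain ⟨y, hym, hty⟩ := hex t ht.2
        have hyL : y ∈ L := by
          rcases hym with rfl | hyL
          · exact absurd (lt_of_le_of_lt (le_trans hay0.le ht.1) hty) (lt_irrefl _)
          · exact hyL
        exact hLconv.ordConnected.out hy0L hyL ⟨ht.1, hty.le⟩
      set m : ℝ := (y0 + x) / 2 with hmdef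
      have hm_mem : m ∈ Ico y0 x := ⟨by rw [hmdef]; linarith, by rw [hmdef]; linarith⟩
      have hmL : m ∈ L := hsub hm_mem
      refine int_lemma a x y0 m A (max (h y0) (h m)) h hy0L.1.1 ?_ hm_mem.2.le hh_int
        (max_lt hy0L.2 hmL.2) ?_ ?_ hIA
      · rw [hmdef]; linarith
      · intro t ht
        rcases le_or_gt t y0 with hty | hty
        · exact le_trans (hmax a y0 t aIcc hy0L.1 ht.1 hty) (max_le hh_a hy0L.2.le)
        · exact (hsub ⟨hty.le, ht.2⟩).2.le
      · intro t ht
        exact hmax y0 m t hy0L.1 hmL.1 ht.1 ht.2
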